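/- arXiv:2401.06534 — 3 statements merged into one kernel-verified Lean document; each statement's English description precedes it below -/
import Mathlib

section
/- Let β : ℤ → ℝ be a nonnegative c-self-controlled sequence with β ⋆ β ≤ Cβ and β_0 > 0, and let θ : ℤ×ℤ → ℝ be nonnegative with θ_{hk} ≤ K·β_h β_k for all h,k and some K > 0. Define d_{hk} = β_h β_k + θ_{hk}. Then there is a constant C' > 0 (depending only on C, K, β_0 and ‖β‖_{ℓ¹}) such that ∑_{j∈ℤ} d_{j,0}·d_{h−j,k} ≤ C'·β_h β_k for all h, k ∈ ℤ. -/
theorem stmt7 (β : ℤ → ℝ) (C K : ℝ) (hC : 0 < C) (hK : 0 < K)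
    (hnn : ∀ i, 0 ≤ β i) (hβ0 : 0 < β 0)
    (hl1 : Summable β)
    (hsum : ∀ i : ℤ, Summable (fun j : ℤ => β j * β (i - j)))
    (hsc : ∀ i : ℤ, (∑' j : ℤ, β j * β (i - j)) ≤ C * β i)
    (θ : ℤ → ℤ → ℝ) (hθnn : ∀ h k, 0 ≤ θ h k) (hθ : ∀ h k, θ h k ≤ K * (β h * β k)) :
    ∃ C' > (0:ℝ), ∀ h k : ℤ,
      (∑' j : ℤ, (β j * β 0 + θ j 0) * (β (h - j) * β k + θ (h - j) k))
        ≤ C' * (β h * β k) := by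
  refine ⟨(1 + K) ^ 2 * β 0 * C, by positivity, fun h k => ?_⟩
  have hterm : ∀ j : ℤ, (β j * β 0 + θ j 0) * (β (h - j) * β k + θ (h - j) k)
      ≤ ((1 + K) ^ 2 * β 0 * β k) * (β j * β (h - j)) := by
    intro j
    have h1 : β j * β 0 + θ j 0 ≤ (1 + K) * (β j * β 0) := by
      have := hθ j 0; nlinarith [hnn j, hnn 0]
    have h2 : β (h - j) * β k + θ (h - j) k ≤ (1 + K) * (β (h - j) * β k) := by
      have := hθ (h - j) k; nlinarith [hnn (h - j), hnn k]
    have hnn1 : 0 ≤ β j * β 0 + θ j 0 := by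
      have := hθnn j 0; have := hnn j; have := hnn 0; positivity
    have hnn2 : 0 ≤ (1 + K) * (β (h - j) * β k) := by
      have := hnn (h - j); have := hnn k; positivity
    calc (β j * β 0 + θ j 0) * (β (h - j) * β k + θ (h - j) k)
        ≤ ((1 + K) * (β j * β 0)) * ((1 + K) * (β (h - j) * β k)) :=
          mul_le_mul h1 h2 (by have := hθnn (h - j) k; have := hnn (h-j); have := hnn k; positivity) (le_trans hnn1 h1)
      _ = ((1 + K) ^ 2 * β 0 * β k) * (β j * β (h - j)) := by ring
  have hsumR : Summable (fun j : ℤ => ((1 + K) ^ 2 * β 0 * β k) * (β j * β (h - j))) :=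
    (hsum h).mul_left _
  have hsumL : Summable (fun j : ℤ =>
      (β j * β 0 + θ j 0) * (β (h - j) * β k + θ (h - j) k)) := by
    apply Summable.of_nonneg_of_le (fun j => ?_) hterm hsumR
    have := hθnn j 0; have := hθnn (h - j) k
    have := hnn j; have := hnn 0; have := hnn (h - j); have := hnn k
    positivity
  calc (∑' j : ℤ, (β j * β 0 + θ j 0) * (β (h - j) * β k + θ (h - j) k))
      ≤ ∑' j : ℤ, ((1 + K) ^ 2 * β 0 * β k) * (β j * β (h - j)) :=
        Summable.tsum_le_tsum hterm hsumL hsumR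
    _ = ((1 + K) ^ 2 * β 0 * β k) * ∑' j : ℤ, β j * β (h - j) := tsum_mul_left
    _ ≤ ((1 + K) ^ 2 * β 0 * β k) * (C * β h) := by
        apply mul_le_mul_of_nonneg_left (hsc h)
        have := hnn k; positivity
    _ = (1 + K) ^ 2 * β 0 * C * (β h * β k) := by ring
end

section
/- Let N ∈ ℕ, M ∈ ℝ, and let c : [0,T) → (Sym(N))^N be an absolutely continuous solution of the system ċ^i − (c^i)ᵀE^i c^i + B(c)ᵀc^i + c^i B(c) = f^i, c^i(0) = g^i, with B(c)(t) ≥ −M·I for all t ∈ [0,T). Assume ∑_{h,k: k≠i} |f^i_{hk}(t)|² ≤ κ_f/N and ∑_{h,k: k≠i} |g^i_{hk}|² ≤ κ_g/N for all i. Then for all t ∈ [0,T) and all i: ∑_{h,k: k≠i} |c^i_{hk}(t)|² ≤ (κ_g + κ_f·t)·e^{(1+4M₊)t}/N, where M₊ = max(M, 0). -/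
open Matrix Real
lemma sum_ite_zero_mul_aux {N : ℕ} (i : Fin N) (a X : Fin N → ℝ) :
    ∑ p, (if p = i then 0 else a p) * X p = (∑ p, a p * X p) - a i * X i := by
  have h1 : ∑ p, (if p = i then a p * X p else 0) = a i * X i := by simp
  rw [eq_sub_iff_add_eq, ← h1, ← Finset.sum_add_distrib]
  apply Finset.sum_congr rfl
  intro p _
  split_ifs <;> simp_all

theorem stmt18 (N : ℕ) (hN : 0 < N) (T : ℝ) (hT : 0 < T) (M : ℝ)
    (κf κg : ℝ)
    (f : ℝ → Fin N → Matrix (Fin N) (Fin N) ℝ)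
    (g : Fin N → Matrix (Fin N) (Fin N) ℝ)
    (c : ℝ → Fin N → Matrix (Fin N) (Fin N) ℝ)
    (hfsym : ∀ t i, (f t i)ᵀ = f t i)
    (hgsym : ∀ i, (g i)ᵀ = g i)
    (hcsym : ∀ t i, (c t i)ᵀ = c t i)
    -- `c` solves `ċ^i − (c^i)ᵀ E^i c^i + B(c)ᵀ c^i + c^i B(c) = f^i` entrywise on `[0,T)`
    (hODE : ∀ i : Fin N, ∀ t ∈ Set.Ico (0:ℝ) T, ∀ h k : Fin N,
      HasDerivAt (fun s => c s i h k)
        (((f t i + (c t i)ᵀ * (Matrix.single i i 1) * c t i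
          - (Matrix.of (fun p q : Fin N => c t p p q))ᵀ * c t i
          - c t i * (Matrix.of (fun p q : Fin N => c t p p q))
          : Matrix (Fin N) (Fin N) ℝ)) h k) t)
    (hinit : ∀ i, c 0 i = g i)
    -- `B(c)(t) ≥ −M·I` in the quadratic-form sense
    (hB : ∀ t ∈ Set.Ico (0:ℝ) T, ∀ v : Fin N → ℝ,
      -M * (∑ i, (v i)^2) ≤ v ⬝ᵥ ((Matrix.of (fun p q : Fin N => c t p p q)).mulVec v))
    (hf : ∀ t ∈ Set.Ico (0:ℝ) T, ∀ i : Fin N,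
      (∑ h : Fin N, ∑ k : Fin N, if k = i then 0 else (f t i h k)^2) ≤ κf / N)
    (hg : ∀ i : Fin N,
      (∑ h : Fin N, ∑ k : Fin N, if k = i then 0 else (g i h k)^2) ≤ κg / N) :
    ∀ t ∈ Set.Ico (0:ℝ) T, ∀ i : Fin N,
      (∑ h : Fin N, ∑ k : Fin N, if k = i then 0 else (c t i h k)^2)
        ≤ (κg + κf * t) * Real.exp ((1 + 4 * max M 0) * t) / N := by
  intro t ht i
  obtain ⟨ht0, htT⟩ := ht
  have hNpos : (0:ℝ) < N := by exact_mod_cast hN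
  have hMp0 : (0:ℝ) ≤ max M 0 := le_max_right M 0
  have hMle : M ≤ max M 0 := le_max_left M 0
  set K : ℝ := 1 + 4 * max M 0 with hKdef
  have hKpos : 0 < K := by positivity
  have hκf : 0 ≤ κf := by
    have h0 := hf 0 ⟨le_refl 0, hT⟩ i
    have h1 : (0:ℝ) ≤ ∑ h : Fin N, ∑ k : Fin N, if k = i then 0 else (f 0 i h k)^2 := by
      apply Finset.sum_nonneg; intro h _; apply Finset.sum_nonneg; intro k _
      split <;> positivity
    have h2 : (0:ℝ) ≤ κf / N := le_trans h1 h0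
    have h3 := mul_nonneg h2 hNpos.le
    rwa [div_mul_cancel₀ _ (ne_of_gt hNpos)] at h3
  set φ : ℝ → ℝ := fun s => ∑ h : Fin N, ∑ k : Fin N, if k = i then 0 else (c s i h k)^2
    with hφdef
  have hφnn : ∀ s, 0 ≤ φ s := by
    intro s; apply Finset.sum_nonneg; intro h _; apply Finset.sum_nonneg; intro k _
    split <;> positivity
  set A : ℝ → Matrix (Fin N) (Fin N) ℝ := fun s =>
    (f s i + (c s i)ᵀ * (Matrix.single i i 1) * c s i
      - (Matrix.of (fun p q : Fin N => c s p p q))ᵀ * c s i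
      - c s i * (Matrix.of (fun p q : Fin N => c s p p q))) with hAdef
  set D : ℝ → ℝ := fun s => ∑ h : Fin N, ∑ k : Fin N,
    if k = i then 0 else 2 * c s i h k * A s h k with hDdef
  have hder : ∀ s ∈ Set.Ico (0:ℝ) T, HasDerivAt φ (D s) s := by
    intro s hs
    have : HasDerivAt (fun u => ∑ h : Fin N, ∑ k : Fin N,
        if k = i then 0 else (c u i h k)^2) (D s) s := by
      apply HasDerivAt.fun_sum
      intro h _
      apply HasDerivAt.fun_sum
      intro k _
      by_cases hk : k = i
      · simpa [hk] using (hasDerivAt_const s (0:ℝ))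
      · have := ((hODE i s hs h k).fun_pow 2)
        simpa [hk, pow_one, hAdef] using this
    exact this
  -- the key differential inequality
  have hDle : ∀ s ∈ Set.Ico (0:ℝ) T, D s ≤ K * φ s + κf / N := by
    intro s hs
    set Bm : Matrix (Fin N) (Fin N) ℝ := Matrix.of (fun p q : Fin N => c s p p q) with hBmdef
    have hBineq : ∀ v : Fin N → ℝ, -(v ⬝ᵥ Bm.mulVec v) ≤ max M 0 * ∑ j, (v j)^2 := by
      intro v
      have h1 := hB s hs v
      have h2 : (0:ℝ) ≤ ∑ j, (v j)^2 := by positivity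
      nlinarith [mul_le_mul_of_nonneg_right hMle h2]
    have hcs : ∀ h k : Fin N, c s i k h = c s i h k :=
      fun h k => congrFun (congrFun (hcsym s i) h) k
    have hAentry : ∀ h k : Fin N, A s h k
        = f s i h k + c s i h i * c s i i k - (∑ p, Bm p h * c s i p k)
          - (∑ p, c s i h p * Bm p k) := by
      intro h k
      have e1 : ((c s i)ᵀ * (Matrix.single i i 1) * c s i : Matrix (Fin N) (Fin N) ℝ) h k
          = c s i h i * c s i i k := by
        simp [Matrix.mul_apply, Matrix.single, Matrix.transpose_apply, ite_and,
          Finset.sum_ite_eq, Finset.sum_ite_eq', Finset.mul_sum, Finset.sum_mul]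
        exact Or.inl (hcs h i)
      have e2 : ((Bmᵀ * c s i : Matrix (Fin N) (Fin N) ℝ)) h k
          = ∑ p, Bm p h * c s i p k := by
        simp [Matrix.mul_apply, Matrix.transpose_apply]
      have e3 : ((c s i * Bm : Matrix (Fin N) (Fin N) ℝ)) h k
          = ∑ p, c s i h p * Bm p k := by
        simp [Matrix.mul_apply]
      simp only [hAdef, Matrix.sub_apply, Matrix.add_apply, e1, ← hBmdef, e2, e3]
    have hD : D s = (∑ h : Fin N, ∑ k : Fin N, if k = i then 0 else 2 * c s i h k * f s i h k)
        + (∑ h : Fin N, ∑ k : Fin N, if k = i then 0 else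
            2 * c s i h k * (c s i h i * c s i i k - ∑ p, c s i h p * Bm p k))
        + (∑ h : Fin N, ∑ k : Fin N, if k = i then 0 else
            2 * c s i h k * (-(∑ p, Bm p h * c s i p k))) := by
      simp only [hDdef, ← Finset.sum_add_distrib]
      apply Finset.sum_congr rfl; intro h _
      apply Finset.sum_congr rfl; intro k _
      by_cases hk : k = i
      · simp [hk]
      · simp only [if_neg hk, hAentry h k]; ring
    have hT1 : (∑ h : Fin N, ∑ k : Fin N, if k = i then 0 else 2 * c s i h k * f s i h k)
        ≤ φ s + κf / N := by
      have step : (∑ h : Fin N, ∑ k : Fin N, if k = i then 0 else 2 * c s i h k * f s i h k)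
          ≤ (∑ h : Fin N, ∑ k : Fin N, if k = i then 0 else (c s i h k)^2)
            + (∑ h : Fin N, ∑ k : Fin N, if k = i then 0 else (f s i h k)^2) := by
        rw [← Finset.sum_add_distrib]
        apply Finset.sum_le_sum; intro h _
        rw [← Finset.sum_add_distrib]
        apply Finset.sum_le_sum; intro k _
        by_cases hk : k = i
        · simp [hk]
        · simp only [if_neg hk]; nlinarith [sq_nonneg (c s i h k - f s i h k)]
      have h2 := hf s hs i
      simp only [hφdef]
      linarith
    have hT2 : (∑ h : Fin N, ∑ k : Fin N, if k = i then 0 else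
          2 * c s i h k * (c s i h i * c s i i k - ∑ p, c s i h p * Bm p k))
        ≤ 2 * max M 0 * φ s := by
      simp only [hφdef]
      rw [Finset.mul_sum]
      apply Finset.sum_le_sum
      intro h _
      set v : Fin N → ℝ := fun q => if q = i then 0 else c s i h q with hvdef
      have key : (∑ k : Fin N, if k = i then 0 else
            2 * c s i h k * (c s i h i * c s i i k - ∑ p, c s i h p * Bm p k))
          = -2 * (v ⬝ᵥ Bm.mulVec v) := by
        have e : v ⬝ᵥ Bm.mulVec v = ∑ p, ∑ k, v p * (Bm p k * v k) := by
          simp [dotProduct, Matrix.mulVec, Finset.mul_sum]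
        rw [e, Finset.sum_comm, Finset.mul_sum]
        apply Finset.sum_congr rfl
        intro k _
        by_cases hk : k = i
        · simp [hk, hvdef]
        · simp only [if_neg hk]
          have e2 : ∑ p, v p * (Bm p k * v k)
              = (∑ p, c s i h p * (Bm p k * c s i h k))
                - c s i h i * (Bm i k * c s i h k) := by
            simp only [hvdef, if_neg hk]
            exact sum_ite_zero_mul_aux i (fun p => c s i h p) (fun p => Bm p k * c s i h k)
          rw [e2]
          have e4 : Bm i k = c s i i k := rfl
          have e5 : ∑ p, c s i h p * (Bm p k * c s i h k)
              = (∑ p, c s i h p * Bm p k) * c s i h k := by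
            rw [Finset.sum_mul]
            apply Finset.sum_congr rfl; intro p _; ring
          rw [e4, e5]; ring
      rw [key]
      have e3 : ∑ j, (v j)^2 = ∑ k : Fin N, if k = i then 0 else (c s i h k)^2 := by
        apply Finset.sum_congr rfl; intro j _
        simp only [hvdef]; split_ifs <;> simp
      have := hBineq v
      rw [e3] at this
      linarith
    have hT3 : (∑ h : Fin N, ∑ k : Fin N, if k = i then 0 else
          2 * c s i h k * (-(∑ p, Bm p h * c s i p k)))
        ≤ 2 * max M 0 * φ s := by
      rw [Finset.sum_comm]
      have hφ' : φ s = ∑ k : Fin N, ∑ h : Fin N, if k = i then 0 else (c s i h k)^2 := by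
        simp only [hφdef]; rw [Finset.sum_comm]
      rw [hφ', Finset.mul_sum]
      apply Finset.sum_le_sum
      intro k _
      by_cases hk : k = i
      · simp [hk]
      · simp only [if_neg hk]
        set w : Fin N → ℝ := fun p => c s i p k with hwdef
        have key : (∑ h : Fin N, 2 * c s i h k * (-(∑ p, Bm p h * c s i p k)))
            = -2 * (w ⬝ᵥ Bm.mulVec w) := by
          have e : w ⬝ᵥ Bm.mulVec w = ∑ p, ∑ h, w p * (Bm p h * w h) := by
            simp [dotProduct, Matrix.mulVec, Finset.mul_sum]
          rw [e, Finset.sum_comm, Finset.mul_sum]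
          apply Finset.sum_congr rfl
          intro h _
          simp only [hwdef]
          rw [mul_neg, Finset.mul_sum, ← Finset.sum_neg_distrib, Finset.mul_sum]
          apply Finset.sum_congr rfl; intro p _; ring
        rw [key]
        have := hBineq w
        simp only [hwdef] at this
        linarith
    rw [hD, hKdef]
    have := hφnn s
    nlinarith [hT1, hT2, hT3]
  -- Gronwall via monotonicity
  set u : ℝ → ℝ := fun s => φ s * Real.exp (-K * s) - (κg + κf * s) / N with hudef
  have huder : ∀ s ∈ Set.Ico (0:ℝ) T,
      HasDerivAt u ((D s - K * φ s) * Real.exp (-K * s) - κf / N) s := by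
    intro s hs
    have h0 : HasDerivAt (fun x : ℝ => -K * x) (-K) s := by
      simpa using (hasDerivAt_id s).const_mul (-K)
    have h1 : HasDerivAt (fun x : ℝ => Real.exp (-K * x)) (Real.exp (-K * s) * -K) s := h0.exp
    have h2 := (hder s hs).mul h1
    have h3 : HasDerivAt (fun x : ℝ => (κg + κf * x) / N) (κf / N) s := by
      have : HasDerivAt (fun x : ℝ => κg + κf * x) κf s := by
        simpa using ((hasDerivAt_id s).const_mul κf).const_add κg
      simpa using this.div_const N
    have h4 := h2.sub h3
    exact h4.congr_deriv (by ring)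
  have hu0 : u 0 ≤ 0 := by
    have hφ0 : φ 0 ≤ κg / N := by
      have := hg i
      simp only [hφdef, hinit i]
      exact this
    simp only [hudef, mul_zero, neg_zero, Real.exp_zero, mul_one, add_zero]
    linarith
  have hanti : AntitoneOn u (Set.Icc 0 t) := by
    have hsub : Set.Icc (0:ℝ) t ⊆ Set.Ico 0 T := fun x hx => ⟨hx.1, lt_of_le_of_lt hx.2 htT⟩
    apply antitoneOn_of_deriv_nonpos (convex_Icc 0 t)
    · intro x hx
      exact (huder x (hsub hx)).continuousAt.continuousWithinAt
    · intro x hx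
      have hx' : x ∈ Set.Icc (0:ℝ) t := interior_subset hx
      exact (huder x (hsub hx')).differentiableAt.differentiableWithinAt
    · intro x hx
      rw [interior_Icc] at hx
      have hx' : x ∈ Set.Ico (0:ℝ) T := ⟨le_of_lt hx.1, lt_trans hx.2 htT⟩
      rw [(huder x hx').deriv]
      have hE : Real.exp (-K * x) ≤ 1 := by
        apply Real.exp_le_one_iff.mpr
        nlinarith [hx.1]
      have hEpos : 0 < Real.exp (-K * x) := Real.exp_pos _
      have h1 : D x - K * φ x ≤ κf / N := by
        have := hDle x hx'; linarith
      have h2 : (D x - K * φ x) * Real.exp (-K * x) ≤ (κf / N) * Real.exp (-K * x) :=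
        mul_le_mul_of_nonneg_right h1 (le_of_lt hEpos)
      have h3 : (κf / N) * Real.exp (-K * x) ≤ κf / N := by
        have : 0 ≤ κf / N := by positivity
        nlinarith
      linarith
  have hfin : u t ≤ u 0 := hanti ⟨le_refl 0, ht0⟩ ⟨ht0, le_refl t⟩ ht0
  simp only [hudef, mul_zero, neg_zero, Real.exp_zero, mul_one, add_zero] at hfin hu0
  have hkey : φ t * Real.exp (-K * t) ≤ (κg + κf * t) / N := by linarith
  have hEpos : 0 < Real.exp (K * t) := Real.exp_pos _
  calc φ t = φ t * Real.exp (-K * t) * Real.exp (K * t) := by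
        rw [mul_assoc, ← Real.exp_add]; norm_num
    _ ≤ (κg + κf * t) / N * Real.exp (K * t) :=
        mul_le_mul_of_nonneg_right hkey (le_of_lt hEpos)
    _ = (κg + κf * t) * Real.exp (K * t) / N := by ring
end

section
/- Suppose a scalar absolutely continuous function y : [0,T) → ℝ satisfies y(0) ≤ κ_g N^{−1} and y(t) ≤ (κ_g + κ_f t)N^{−1} + ∫₀ᵗ (1 + 4M₊ + 2√(κ₀(s)))·y(s) ds for all t ∈ [0,T), where κ₀(t) = (κ_g + κ_f t)e^{(1+4M₊)t}. Then y(t) ≤ 2κ₀(t)·e^{2∫₀ᵗ √(κ₀(s)) ds}·N^{−1} for all t ∈ [0,T). -/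
open Real intervalIntegral

theorem stmt19 (T : ℝ) (hT : 0 < T) (κf κg Mp : ℝ) (N : ℝ)
    (hκf : 0 ≤ κf) (hκg : 0 ≤ κg) (hMp : 0 ≤ Mp) (hN : 1 ≤ N)
    (y : ℝ → ℝ) (hy : ContinuousOn y (Set.Icc 0 T))
    (κ0 : ℝ → ℝ) (hκ0 : ∀ t, κ0 t = (κg + κf * t) * Real.exp ((1 + 4 * Mp) * t))
    (h0 : y 0 ≤ κg / N)
    (hint : ∀ t ∈ Set.Ico (0:ℝ) T,
      y t ≤ (κg + κf * t) / N +
        ∫ s in (0:ℝ)..t, (1 + 4 * Mp + 2 * Real.sqrt (κ0 s)) * y s) :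
    ∀ t ∈ Set.Ico (0:ℝ) T,
      y t ≤ 2 * κ0 t * Real.exp (2 * ∫ s in (0:ℝ)..t, Real.sqrt (κ0 s)) / N := by
  have hN0 : (0:ℝ) < N := lt_of_lt_of_le one_pos hN
  -- abbreviations
  set a : ℝ → ℝ := fun s => 1 + 4 * Mp + 2 * Real.sqrt (κ0 s) with ha
  have hκ0C : Continuous κ0 := by
    have : κ0 = fun t => (κg + κf * t) * Real.exp ((1 + 4 * Mp) * t) := funext hκ0
    rw [this]; fun_prop
  have haC : Continuous a := by
    rw [ha]
    exact (continuous_const.add ((continuous_const.mul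
      (Real.continuous_sqrt.comp hκ0C))))
  have haNN : ∀ s, 0 ≤ a s := by
    intro s
    have := Real.sqrt_nonneg (κ0 s)
    simp only [ha]; nlinarith
  set A : ℝ → ℝ := fun s => ∫ u in (0:ℝ)..s, a u with hA
  set Y : ℝ → ℝ := fun s => ∫ u in (0:ℝ)..s, a u * y u with hYdef
  set z : ℝ → ℝ := fun s => (κg + κf * s) / N + Y s with hzdef
  have hyz : ∀ s ∈ Set.Ico (0:ℝ) T, y s ≤ z s := by
    intro s hs
    have := hint s hs
    simpa [hzdef, hYdef, ha] using this
  -- derivative of A everywhere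
  have hAd : ∀ s : ℝ, HasDerivAt A (a s) s := by
    intro s
    exact intervalIntegral.integral_hasDerivAt_right
      (haC.intervalIntegrable 0 s)
      (haC.stronglyMeasurableAtFilter _ _) haC.continuousAt
  have hAC : Continuous A := by
    refine continuous_iff_continuousAt.2 fun s => (hAd s).continuousAt
  intro t ht
  obtain ⟨ht0, htT⟩ := ht
  rcases eq_or_lt_of_le ht0 with h | htpos
  · -- t = 0
    subst h
    simp only [intervalIntegral.integral_same, mul_zero, Real.exp_zero, mul_one]
    have : κ0 0 = κg := by rw [hκ0]; simp
    rw [this]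
    have h4 : 0 ≤ κg / N := div_nonneg hκg hN0.le
    have h5 : 2 * κg / N = κg / N + κg / N := by ring
    linarith
  -- main case 0 < t
  have hayC : ContinuousOn (fun u => a u * y u) (Set.Icc 0 T) :=
    haC.continuousOn.mul hy
  have hYd : ∀ s ∈ Set.Ioo (0:ℝ) t, HasDerivAt Y (a s * y s) s := by
    intro s hs
    have hsT : s ∈ Set.Ioo (0:ℝ) T := ⟨hs.1, lt_trans hs.2 htT⟩
    have hmem : Set.Icc (0:ℝ) T ∈ nhds s :=
      Icc_mem_nhds hsT.1 hsT.2
    have hca : ContinuousAt (fun u => a u * y u) s := hayC.continuousAt hmem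
    have hii : IntervalIntegrable (fun u => a u * y u) MeasureTheory.volume 0 s := by
      apply ContinuousOn.intervalIntegrable
      apply hayC.mono
      rw [Set.uIcc_of_le hs.1.le]
      exact Set.Icc_subset_Icc le_rfl hsT.2.le
    have hmeas : StronglyMeasurableAtFilter (fun u => a u * y u) (nhds s)
        MeasureTheory.volume := by
      refine ContinuousOn.stronglyMeasurableAtFilter isOpen_Ioo
        (hayC.mono ?_) s hsT
      exact Set.Ioo_subset_Icc_self
    exact intervalIntegral.integral_hasDerivAt_right hii hmeas hca
  have hYC : ContinuousOn Y (Set.Icc 0 t) := by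
    have : Set.Icc (0:ℝ) t = Set.uIcc 0 t := (Set.uIcc_of_le ht0).symm
    rw [this]
    apply intervalIntegral.continuousOn_primitive_interval
    apply ContinuousOn.integrableOn_compact isCompact_uIcc
    apply hayC.mono
    rw [Set.uIcc_of_le ht0]
    exact Set.Icc_subset_Icc le_rfl htT.le
  -- the auxiliary function h
  set h : ℝ → ℝ := fun s => z s * Real.exp (-(A s)) - κf * s / N with hhdef
  have hzC : ContinuousOn z (Set.Icc 0 t) := by
    apply ContinuousOn.add _ hYC
    fun_prop
  have hhC : ContinuousOn h (Set.Icc 0 t) := by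
    apply ContinuousOn.sub
    · exact hzC.mul ((hAC.neg.rexp).continuousOn)
    · fun_prop
  have hhd : ∀ s ∈ Set.Ioo (0:ℝ) t, HasDerivAt h
      ((κf / N + a s * y s) * Real.exp (-(A s)) +
        z s * (Real.exp (-(A s)) * -(a s)) - κf / N) s := by
    intro s hs
    have h1 : HasDerivAt (fun u => (κg + κf * u) / N) (κf / N) s := by
      have := (((hasDerivAt_id s).const_mul κf).const_add κg).div_const N
      simpa using this
    have hz' : HasDerivAt z (κf / N + a s * y s) s := h1.add (hYd s hs)
    have hE : HasDerivAt (fun u => Real.exp (-(A u)))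
        (Real.exp (-(A s)) * -(a s)) s := ((hAd s).neg).exp
    have h3 : HasDerivAt (fun u => κf * u / N) (κf / N) s := by
      have := ((hasDerivAt_id s).const_mul κf).div_const N
      simpa using this
    exact (hz'.mul hE).sub h3
  have hANN : ∀ s, 0 ≤ s → 0 ≤ A s := by
    intro s hs
    exact intervalIntegral.integral_nonneg hs fun u _ => haNN u
  have hderiv_nonpos : ∀ s ∈ Set.Ioo (0:ℝ) t,
      (κf / N + a s * y s) * Real.exp (-(A s)) +
        z s * (Real.exp (-(A s)) * -(a s)) - κf / N ≤ 0 := by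
    intro s hs
    have hE1 : Real.exp (-(A s)) ≤ 1 := by
      rw [Real.exp_le_one_iff]
      linarith [hANN s hs.1.le]
    have hEpos : 0 < Real.exp (-(A s)) := Real.exp_pos _
    have hyzs : y s ≤ z s := hyz s ⟨hs.1.le, lt_trans hs.2 htT⟩
    have hkfN : 0 ≤ κf / N := div_nonneg hκf hN0.le
    have key : a s * Real.exp (-(A s)) * (y s - z s) ≤ 0 :=
      mul_nonpos_of_nonneg_of_nonpos (mul_nonneg (haNN s) hEpos.le)
        (by linarith)
    have key2 : κf / N * Real.exp (-(A s)) ≤ κf / N * 1 :=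
      mul_le_mul_of_nonneg_left hE1 hkfN
    have main : ∀ k e aa yy zz : ℝ, aa * e * (yy - zz) ≤ 0 → k * e ≤ k * 1 →
        (k + aa * yy) * e + zz * (e * -aa) - k ≤ 0 := by
      intro k e aa yy zz h1 h2; nlinarith
    exact main (κf / N) (Real.exp (-(A s))) (a s) (y s) (z s) key key2
  have hanti : AntitoneOn h (Set.Icc 0 t) := by
    apply antitoneOn_of_deriv_nonpos (convex_Icc 0 t) hhC
    · intro s hs
      rw [interior_Icc] at hs
      exact (hhd s hs).differentiableAt.differentiableWithinAt
    · intro s hs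
      rw [interior_Icc] at hs
      rw [(hhd s hs).deriv]
      exact hderiv_nonpos s hs
  have hht : h t ≤ h 0 :=
    hanti (Set.left_mem_Icc.2 ht0) (Set.right_mem_Icc.2 ht0) ht0
  have hA0 : A 0 = 0 := intervalIntegral.integral_same
  have hY0 : Y 0 = 0 := intervalIntegral.integral_same
  have hh0 : h 0 = κg / N := by
    simp [hhdef, hzdef, hY0, hA0]
  have hzt : z t ≤ (κg + κf * t) / N * Real.exp (A t) := by
    have h2 : z t * Real.exp (-(A t)) ≤ κg / N + κf * t / N := by
      have := hht
      rw [hh0] at this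
      simp only [hhdef] at this
      linarith
    have h3 := mul_le_mul_of_nonneg_right h2 (Real.exp_pos (A t)).le
    rw [mul_assoc, ← Real.exp_add, neg_add_cancel, Real.exp_zero, mul_one] at h3
    calc z t ≤ (κg / N + κf * t / N) * Real.exp (A t) := h3
      _ = (κg + κf * t) / N * Real.exp (A t) := by ring
  -- compute A t
  have hsqrtC : Continuous (fun s => Real.sqrt (κ0 s)) :=
    Real.continuous_sqrt.comp hκ0C
  have hAt : A t = (1 + 4 * Mp) * t +
      2 * ∫ s in (0:ℝ)..t, Real.sqrt (κ0 s) := by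
    have h1 : IntervalIntegrable (fun _ : ℝ => (1:ℝ) + 4 * Mp)
        MeasureTheory.volume 0 t := intervalIntegrable_const
    have h2 : IntervalIntegrable (fun s => 2 * Real.sqrt (κ0 s))
        MeasureTheory.volume 0 t :=
      (continuous_const.mul hsqrtC).intervalIntegrable 0 t
    have : A t = ∫ u in (0:ℝ)..t,
        ((1 + 4 * Mp) + 2 * Real.sqrt (κ0 u)) := rfl
    rw [this, intervalIntegral.integral_add h1 h2,
      intervalIntegral.integral_const, intervalIntegral.integral_const_mul]
    simp only [smul_eq_mul]
    ring
  have hyt : y t ≤ (κg + κf * t) / N * Real.exp (A t) :=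
    le_trans (hyz t ⟨ht0, htT⟩) hzt
  rw [hAt, Real.exp_add] at hyt
  set I : ℝ := ∫ s in (0:ℝ)..t, Real.sqrt (κ0 s) with hI
  have hK : 0 ≤ (κg + κf * t) * Real.exp ((1 + 4 * Mp) * t) * Real.exp (2 * I) := by
    have : 0 ≤ κg + κf * t := add_nonneg hκg (mul_nonneg hκf ht0)
    positivity
  rw [hκ0 t]
  have e1 : (κg + κf * t) / N *
      (Real.exp ((1 + 4 * Mp) * t) * Real.exp (2 * I)) =
      (κg + κf * t) * Real.exp ((1 + 4 * Mp) * t) * Real.exp (2 * I) / N := by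
    ring
  have e2 : 2 * ((κg + κf * t) * Real.exp ((1 + 4 * Mp) * t)) * Real.exp (2 * I) / N =
      2 * ((κg + κf * t) * Real.exp ((1 + 4 * Mp) * t) * Real.exp (2 * I) / N) := by
    ring
  rw [e2]
  rw [e1] at hyt
  have := div_nonneg hK hN0.le
  linarith
end
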